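/- Let F be a field, A_1, ..., A_k pairwise disjoint subsets of [m], and for each i let v_i = α_i e_{d_i} + c_i ∈ F^m where α_i ≠ 0, d_i ∉ A_i, and c_i is a nonzero vector supported in A_i. If v_i and v_j (i ≠ j) are linearly dependent, then d_i ∈ A_j and d_j ∈ A_i. -/
import Mathlib

private lemma stmt_4_key (F : Type*) [Field F] (m k : ℕ)
    (A : Fin k → Set (Fin m)) (hdisj : Pairwise (Function.onFun Disjoint A))
    (d : Fin k → Fin m) (α : Fin k → F) (c : Fin k → Fin m → F) (v : Fin k → Fin m → F)
    (hd : ∀ i, d i ∉ A i) (hα : ∀ i, α i ≠ 0) (hc0 : ∀ i, c i ≠ 0)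
    (hcsupp : ∀ i j, c i j ≠ 0 → j ∈ A i)
    (hv : ∀ i, v i = α i • (Pi.single (d i) (1 : F) : Fin m → F) + c i)
    (i j : Fin k) (hij : i ≠ j) (a b : F) (ha : a ≠ 0) (hb : b ≠ 0)
    (heq : ∀ x, a * v i x + b * v j x = 0) : d i ∈ A j := by
  have hci : c i (d i) = 0 := by
    by_contra h; exact hd i (hcsupp i _ h)
  have hvi : v i (d i) = α i := by
    rw [hv i]; simp [Pi.single_eq_same, hci]
  have hvj : v j (d i) ≠ 0 := by
    intro h0
    have := heq (d i)
    rw [hvi, h0, mul_zero, add_zero, mul_eq_zero] at this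
    exact this.elim ha (hα i)
  rw [hv j] at hvj
  simp only [Pi.add_apply, Pi.smul_apply, smul_eq_mul] at hvj
  by_cases hcj : c j (d i) ≠ 0
  · exact hcsupp j _ hcj
  push_neg at hcj
  -- then d i = d j, derive contradiction from a support point of c i
  rw [hcj, add_zero, mul_ne_zero_iff] at hvj
  have hdd : d j = d i := by
    by_contra h
    exact hvj.2 (Pi.single_eq_of_ne (Ne.symm h) 1)
  obtain ⟨x, hx⟩ := Function.ne_iff.mp (hc0 i)
  simp only [Pi.zero_apply] at hx
  have hxAi : x ∈ A i := hcsupp i x hx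
  have hxd : d i ≠ x := fun h => hd i (h ▸ hxAi)
  have hvix : v i x = c i x := by
    rw [hv i]; simp [Pi.single_eq_of_ne' hxd, hxd]
  have hvjx : v j x ≠ 0 := by
    intro h0
    have := heq x
    rw [h0, mul_zero, add_zero, mul_eq_zero, hvix] at this
    exact this.elim ha hx
  rw [hv j] at hvjx
  simp only [Pi.add_apply, Pi.smul_apply, smul_eq_mul] at hvjx
  have hcjx : c j x = 0 := by
    by_contra h
    exact (Set.disjoint_left.mp (hdisj hij) hxAi) (hcsupp j x h)
  rw [hcjx, add_zero, mul_ne_zero_iff] at hvjx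
  have : d j = x := by
    by_contra h
    exact hvjx.2 (Pi.single_eq_of_ne (Ne.symm h) 1)
  exact absurd (this ▸ hdd).symm hxd


/-- Linear dependence of two decoding vectors `v i = α i • e_{d i} + c i` forces
a mutual loop: `d i ∈ A j` and `d j ∈ A i`. -/
theorem stmt_4 (F : Type*) [Field F] (m k : ℕ)
    (A : Fin k → Set (Fin m)) (hdisj : Pairwise (Function.onFun Disjoint A))
    (d : Fin k → Fin m) (α : Fin k → F) (c : Fin k → Fin m → F) (v : Fin k → Fin m → F)
    (hd : ∀ i, d i ∉ A i) (hα : ∀ i, α i ≠ 0) (hc0 : ∀ i, c i ≠ 0)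
    (hcsupp : ∀ i j, c i j ≠ 0 → j ∈ A i)
    (hv : ∀ i, v i = α i • (Pi.single (d i) (1 : F) : Fin m → F) + c i)
    (i j : Fin k) (hij : i ≠ j)
    (hdep : ∃ a b : F, (a ≠ 0 ∨ b ≠ 0) ∧ a • v i + b • v j = 0) :
    d i ∈ A j ∧ d j ∈ A i := by
  obtain ⟨a, b, hab, heq⟩ := hdep
  have heq' : ∀ x, a * v i x + b * v j x = 0 := by
    intro x
    have := congrFun heq x
    simpa using this
  -- neither vector can be zero
  have hvne : ∀ l : Fin k, ∃ x, v l x ≠ 0 := by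
    intro l
    obtain ⟨x, hx⟩ := Function.ne_iff.mp (hc0 l)
    simp only [Pi.zero_apply] at hx
    have hxA : x ∈ A l := hcsupp l x hx
    have hxd : d l ≠ x := fun h => hd l (h ▸ hxA)
    refine ⟨x, ?_⟩
    rw [hv l]
    simpa [Pi.single_eq_of_ne' hxd] using hx
  have ha : a ≠ 0 := by
    intro h0
    obtain ⟨x, hx⟩ := hvne j
    have := heq' x
    rw [h0, zero_mul, zero_add, mul_eq_zero] at this
    rcases this with h | h
    · exact hab.resolve_left (fun h' => h' h0) h
    · exact hx h
  have hb : b ≠ 0 := by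
    intro h0
    obtain ⟨x, hx⟩ := hvne i
    have := heq' x
    rw [h0, zero_mul, add_zero, mul_eq_zero] at this
    rcases this with h | h
    · exact ha h
    · exact hx h
  refine ⟨stmt_4_key F m k A hdisj d α c v hd hα hc0 hcsupp hv i j hij a b ha hb heq',
    stmt_4_key F m k A hdisj d α c v hd hα hc0 hcsupp hv j i hij.symm b a hb ha ?_⟩
  intro x
  rw [add_comm]
  exact heq' x
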